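/- Let τ > 0 and suppose W and W* both lie in B(W^(0), τ). Then for every training index i ∈ [n]: ⟨W − W*, ∇_W L_i(W)⟩ ≥ (1 − 2 ε_app(τ)) · ℓ(y_i f_W(x_i)) − ℓ(y_i F_{W^(0),W*}(x_i)). -/

import Mathlib

open MeasureTheory ProbabilityTheory Real
open scoped BigOperators ENNReal NNReal

noncomputable section

namespace Paper

/-- ReLU activation. -/
def relu (z : ℝ) : ℝ := max z 0

/-- Formal derivative of the ReLU: `σ'(z) = 1{z > 0}`. -/
def relu' (z : ℝ) : ℝ := if 0 < z then 1 else 0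

/-- Cross-entropy loss `ℓ(z) = log(1 + exp(-z))`. -/
def xent (z : ℝ) : ℝ := Real.log (1 + Real.exp (-z))

/-- Derivative of the cross-entropy loss: `ℓ'(z) = -1/(1+e^z)`. -/
def xent' (z : ℝ) : ℝ := -(1 / (1 + Real.exp z))

/-- `-ℓ'(z) = 1/(1+e^z)`. -/
def negXent' (z : ℝ) : ℝ := 1 / (1 + Real.exp z)

/-- Weight space for an `L`-layer network of width `m` on inputs of dimension `d`.
Every layer is stored as an `m × (m+d)` array; layer `0` only uses the block of the
first `d` columns, layers `1,…,L-2` the block of the first `m` columns, and layer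
`L-1` the first row and first `m` columns. -/
abbrev Wts (L m d : ℕ) := Fin L → Fin m → Fin (m + d) → ℝ

/-- Extension of the weights to arbitrary natural layer indices. -/
def extW (L m d : ℕ) (W : Wts L m d) : ℕ → Fin m → Fin (m + d) → ℝ :=
  fun l => if h : l < L then W ⟨l, h⟩ else fun _ _ => 0

def colD (m d : ℕ) (k : Fin d) : Fin (m + d) := Fin.castLE (Nat.le_add_left d m) k

def colM (m d : ℕ) (k : Fin m) : Fin (m + d) := Fin.castLE (Nat.le_add_right m d) k

/-- Pre-activations: `preact m d W x l` is the vector `W_l σ(W_{l-1} ⋯ σ(W_0 x) ⋯)`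
(0-indexed layers). -/
def preact (m d : ℕ) (W : ℕ → Fin m → Fin (m + d) → ℝ) (x : Fin d → ℝ) : ℕ → Fin m → ℝ
  | 0 => fun j => ∑ k : Fin d, W 0 j (colD m d k) * x k
  | l + 1 => fun j => ∑ k : Fin m, W (l + 1) j (colM m d k) * relu (preact m d W x l k)

/-- Network output `f_W(x) = √m · W_{L-1} σ( ⋯ σ(W_0 x) ⋯ )` (row `0` of the last layer). -/
def netOut (L m d : ℕ) (W : Wts L m d) (x : Fin d → ℝ) : ℝ :=
  Real.sqrt m * ∑ j : Fin m, ∑ k : Fin m,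
    (if (j : ℕ) = 0 then
      extW L m d W (L - 1) j (colM m d k) * relu (preact m d (extW L m d W) x (L - 2) k)
    else 0)

/-- Backpropagated errors; `deltaAux L m d W x t` is the delta at pre-activation level
`L - 2 - t`. -/
def deltaAux (L m d : ℕ) (W : ℕ → Fin m → Fin (m + d) → ℝ) (x : Fin d → ℝ) :
    ℕ → Fin m → ℝ
  | 0 => fun k =>
      Real.sqrt m * (∑ j : Fin m, if (j : ℕ) = 0 then W (L - 1) j (colM m d k) else 0) *
        relu' (preact m d W x (L - 2) k)
  | t + 1 => fun k =>
      relu' (preact m d W x (L - 2 - (t + 1)) k) *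
        ∑ j : Fin m, W (L - 2 - t) j (colM m d k) * deltaAux L m d W x t j

/-- Delta at pre-activation level `l`. -/
def delta (L m d : ℕ) (W : ℕ → Fin m → Fin (m + d) → ℝ) (x : Fin d → ℝ) (l : ℕ) :
    Fin m → ℝ :=
  deltaAux L m d W x (L - 2 - l)

/-- Formal chain-rule gradient `∇_{W_l} f_W(x)` of the network output w.r.t. layer `l`. -/
def gradLayer (L m d : ℕ) (W : Wts L m d) (x : Fin d → ℝ) (l : ℕ) :
    Fin m → Fin (m + d) → ℝ :=
  fun j c =>
    if l = L - 1 then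
      (if h : (j : ℕ) = 0 ∧ (c : ℕ) < m then
        Real.sqrt m * relu (preact m d (extW L m d W) x (L - 2) ⟨(c : ℕ), h.2⟩)
      else 0)
    else if l = 0 then
      delta L m d (extW L m d W) x 0 j * (if h : (c : ℕ) < d then x ⟨(c : ℕ), h⟩ else 0)
    else
      delta L m d (extW L m d W) x l j *
        (if h : (c : ℕ) < m then relu (preact m d (extW L m d W) x (l - 1) ⟨(c : ℕ), h⟩)
         else 0)

/-- Entrywise inner product of two layer matrices. -/
def inner2 (m d : ℕ) (A B : Fin m → Fin (m + d) → ℝ) : ℝ :=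
  ∑ j : Fin m, ∑ c : Fin (m + d), A j c * B j c

/-- `⟨∇ f_W(x), V⟩ = Σ_l ⟨∇_{W_l} f_W(x), V_l⟩`. -/
def gradInner (L m d : ℕ) (W : Wts L m d) (x : Fin d → ℝ) (V : Wts L m d) : ℝ :=
  ∑ l : Fin L, inner2 m d (gradLayer L m d W x (l : ℕ)) (V l)

/-- NTRF model `F_{W⁰,W}(x) = f_{W⁰}(x) + ⟨∇f_{W⁰}(x), W - W⁰⟩`. -/
def ntrf (L m d : ℕ) (W0 W : Wts L m d) (x : Fin d → ℝ) : ℝ :=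
  netOut L m d W0 x + gradInner L m d W0 x (W - W0)

/-- Number of rows actually used by layer `l`. -/
def rowsOf (L m : ℕ) (l : ℕ) : ℕ := if l = L - 1 then 1 else m

/-- Number of columns actually used by layer `l`. -/
def colsOf (m d : ℕ) (l : ℕ) : ℕ := if l = 0 then d else m

/-- Squared Frobenius norm of the relevant block of layer `l`. -/
def layerNormSq (L m d : ℕ) (l : ℕ) (A : Fin m → Fin (m + d) → ℝ) : ℝ :=
  ∑ j : Fin m, ∑ c : Fin (m + d),
    if (j : ℕ) < rowsOf L m l ∧ (c : ℕ) < colsOf m d l then (A j c) ^ 2 else 0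

/-- `W ∈ B(W⁰, τ)`, i.e. `max_l ‖W_l − W⁰_l‖_F ≤ τ`. -/
def inBall (L m d : ℕ) (W0 W : Wts L m d) (τ : ℝ) : Prop :=
  ∀ l : Fin L, Real.sqrt (layerNormSq L m d (l : ℕ) (W l - W0 l)) ≤ τ

/-- `‖W − W'‖_F²` summed over all layers. -/
def distSq (L m d : ℕ) (W W' : Wts L m d) : ℝ :=
  ∑ l : Fin L, layerNormSq L m d (l : ℕ) (W l - W' l)

/-- Loss on a single example. -/
def sampleLoss (L m d : ℕ) (W : Wts L m d) (x : Fin d → ℝ) (y : ℝ) : ℝ :=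
  xent (y * netOut L m d W x)

/-- Empirical training loss `L_S(W)`. -/
def trainLoss (L m d n : ℕ) (X : Fin n → Fin d → ℝ) (Y : Fin n → ℝ) (W : Wts L m d) : ℝ :=
  (1 / (n : ℝ)) * ∑ i : Fin n, sampleLoss L m d W (X i) (Y i)

/-- Formal gradient of the single-sample loss w.r.t. layer `l`. -/
def sampleLossGrad (L m d : ℕ) (x : Fin d → ℝ) (y : ℝ) (W : Wts L m d) (l : ℕ) :
    Fin m → Fin (m + d) → ℝ :=
  fun j c => xent' (y * netOut L m d W x) * y * gradLayer L m d W x l j c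

/-- Formal gradient of the empirical loss w.r.t. layer `l`. -/
def trainLossGrad (L m d n : ℕ) (X : Fin n → Fin d → ℝ) (Y : Fin n → ℝ)
    (W : Wts L m d) (l : ℕ) : Fin m → Fin (m + d) → ℝ :=
  fun j c => (1 / (n : ℝ)) * ∑ i : Fin n, sampleLossGrad L m d (X i) (Y i) W l j c

/-- Gradient descent iterates with step size `η` started at `W0`. -/
def gdIter (L m d n : ℕ) (X : Fin n → Fin d → ℝ) (Y : Fin n → ℝ) (η : ℝ)
    (W0 : Wts L m d) : ℕ → Wts L m d
  | 0 => W0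
  | t + 1 => fun l j c =>
      gdIter L m d n X Y η W0 t l j c -
        η * trainLossGrad L m d n X Y (gdIter L m d n X Y η W0 t) (l : ℕ) j c

/-- Online SGD iterates: step `i → i+1` uses the example `S i`. -/
def sgdIter (L m d : ℕ) (S : ℕ → (Fin d → ℝ) × ℝ) (η : ℝ) (W0 : Wts L m d) :
    ℕ → Wts L m d
  | 0 => W0
  | i + 1 => fun l j c =>
      sgdIter L m d S η W0 i l j c -
        η * sampleLossGrad L m d (S i).1 (S i).2 (sgdIter L m d S η W0 i) (l : ℕ) j c

/-- Extension of a finite sample to a stream. -/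
def extS (n d : ℕ) (S : Fin n → (Fin d → ℝ) × ℝ) : ℕ → (Fin d → ℝ) × ℝ :=
  fun i => if h : i < n then S ⟨i, h⟩ else (fun _ => 0, 1)

/-- Linear approximation error `ε_app(τ)` around `W0`. -/
def epsApp (L m d n : ℕ) (X : Fin n → Fin d → ℝ) (W0 : Wts L m d) (τ : ℝ) : ℝ :=
  sSup { e : ℝ | ∃ (i : Fin n) (W W' : Wts L m d),
    inBall L m d W0 W τ ∧ inBall L m d W0 W' τ ∧
    e = |netOut L m d W' (X i) - netOut L m d W (X i) -
          gradInner L m d W (X i) (W' - W)| }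

/-- Gradient norm bound `M(τ)` around `W0`. -/
def gradBound (L m d n : ℕ) (X : Fin n → Fin d → ℝ) (W0 : Wts L m d) (τ : ℝ) : ℝ :=
  sSup { e : ℝ | ∃ (i : Fin n) (l : Fin L) (W : Wts L m d),
    inBall L m d W0 W τ ∧
    e = Real.sqrt (layerNormSq L m d (l : ℕ) (gradLayer L m d W (X i) (l : ℕ))) }

/-- Average cross-entropy loss of the NTRF model `F_{W0,W}` on the training set. -/
def ntrfLoss (L m d n : ℕ) (X : Fin n → Fin d → ℝ) (Y : Fin n → ℝ)
    (W0 W : Wts L m d) : ℝ :=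
  (1 / (n : ℝ)) * ∑ i : Fin n, xent (Y i * ntrf L m d W0 W (X i))

/-- `ε_NTRF`: the minimum training loss achievable by the NTRF class `F(W0, R)`. -/
def epsNTRF (L m d n : ℕ) (X : Fin n → Fin d → ℝ) (Y : Fin n → ℝ)
    (W0 : Wts L m d) (R : ℝ) : ℝ :=
  sInf { e : ℝ | ∃ W : Wts L m d,
    inBall L m d W0 W (R / Real.sqrt m) ∧ e = ntrfLoss L m d n X Y W0 W }

/-- Variance of the Gaussian initialization at layer `l`. -/
def initVar (L m : ℕ) (l : ℕ) : ℝ≥0 := if l = L - 1 then (m : ℝ≥0)⁻¹ else 2 * (m : ℝ≥0)⁻¹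

/-- The Gaussian random initialization: entries of `W_0,…,W_{L-2}` are i.i.d.
`N(0, 2/m)` and entries of `W_{L-1}` are i.i.d. `N(0, 1/m)`. -/
def initMeasure (L m d : ℕ) : Measure (Wts L m d) :=
  Measure.pi fun l : Fin L =>
    Measure.pi fun _ : Fin m =>
      Measure.pi fun _ : Fin (m + d) => gaussianReal 0 (initVar L m (l : ℕ))

/-- Expected 0-1 error `L_D^{0-1}(W)`. -/
def zeroOneLoss (L m d : ℕ) (D : Measure ((Fin d → ℝ) × ℝ)) (W : Wts L m d) : ℝ :=
  (D {p | p.2 * netOut L m d W p.1 < 0}).toReal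


lemma one_add_exp_pos (z : ℝ) : 0 < 1 + Real.exp z := by positivity

lemma relu_nonneg (z : ℝ) : 0 ≤ relu z := le_max_right z 0
lemma abs_relu_le (z : ℝ) : |relu z| ≤ |z| := by
  rw [abs_of_nonneg (relu_nonneg z)]
  rcases le_total z 0 with h | h
  · simp [relu, max_eq_right h, abs_nonneg]
  · simp [relu, max_eq_left h, le_abs_self]
lemma abs_relu'_le (z : ℝ) : |relu' z| ≤ 1 := by
  unfold relu'; split <;> simp

/-- single in-block entry is bounded by the Frobenius norm of the block -/
lemma abs_entry_le_norm (L m d : ℕ) (l : ℕ) (A : Fin m → Fin (m + d) → ℝ)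
    (j : Fin m) (c : Fin (m + d)) (hj : (j : ℕ) < rowsOf L m l) (hc : (c : ℕ) < colsOf m d l) :
    |A j c| ≤ Real.sqrt (layerNormSq L m d l A) := by
  rw [← Real.sqrt_sq_eq_abs]
  apply Real.sqrt_le_sqrt
  unfold layerNormSq
  have h1 : A j c ^ 2 ≤ ∑ c' : Fin (m + d),
      (if (j : ℕ) < rowsOf L m l ∧ (c' : ℕ) < colsOf m d l then (A j c') ^ 2 else 0) := by
    have := Finset.single_le_sum (f := fun c' : Fin (m + d) =>
      (if (j : ℕ) < rowsOf L m l ∧ (c' : ℕ) < colsOf m d l then (A j c') ^ 2 else 0))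
      (fun c' _ => by positivity) (Finset.mem_univ c)
    simpa [hj, hc] using this
  refine h1.trans ?_
  exact Finset.single_le_sum (f := fun j' : Fin m => ∑ c' : Fin (m + d),
      (if (j' : ℕ) < rowsOf L m l ∧ (c' : ℕ) < colsOf m d l then (A j' c') ^ 2 else 0))
    (fun j' _ => Finset.sum_nonneg fun c' _ => by positivity) (Finset.mem_univ j)

lemma inBall_self (L m d : ℕ) (W0 : Wts L m d) (τ : ℝ) (hτ : 0 ≤ τ) :
    inBall L m d W0 W0 τ := by
  intro l
  have : layerNormSq L m d (l : ℕ) (W0 l - W0 l) = 0 := by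
    unfold layerNormSq
    simp
  rw [this, Real.sqrt_zero]; exact hτ

/-- in-block entries of a ball member are close to W0's -/
lemma entry_close (L m d : ℕ) (W0 W : Wts L m d) (τ : ℝ)
    (hW : inBall L m d W0 W τ) (l : Fin L) (j : Fin m) (c : Fin (m + d))
    (hj : (j : ℕ) < rowsOf L m (l : ℕ)) (hc : (c : ℕ) < colsOf m d (l : ℕ)) :
    |W l j c - W0 l j c| ≤ τ := by
  have h := abs_entry_le_norm L m d (l : ℕ) (W l - W0 l) j c hj hc
  simpa using h.trans (hW l)


lemma preact_bound (m d : ℕ) (W : ℕ → Fin m → Fin (m + d) → ℝ) (x : Fin d → ℝ)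
    (K B : ℝ) (hK : 0 ≤ K) (hB : (m : ℝ) * K ≤ B) (hB1 : 1 ≤ B)
    (hx : ∀ k, |x k| ≤ 1) (N : ℕ)
    (h0 : ∀ j k, |W 0 j (colD m d k)| ≤ K)
    (hMid : ∀ l', 1 ≤ l' → l' ≤ N → ∀ j k, |W l' j (colM m d k)| ≤ K) :
    ∀ l, l ≤ N → ∀ j, |preact m d W x l j| ≤ (d : ℝ) * K * B ^ l := by
  intro l
  induction l with
  | zero =>
    intro _ j
    rw [pow_zero, mul_one]
    calc |preact m d W x 0 j| ≤ ∑ k : Fin d, |W 0 j (colD m d k) * x k| :=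
          Finset.abs_sum_le_sum_abs _ _
      _ ≤ ∑ _k : Fin d, K := by
          refine Finset.sum_le_sum fun k _ => ?_
          rw [abs_mul]
          calc |W 0 j (colD m d k)| * |x k| ≤ K * 1 :=
                mul_le_mul (h0 j k) (hx k) (abs_nonneg _) hK
            _ = K := mul_one K
      _ = (d : ℝ) * K := by simp [mul_comm]
  | succ l ih =>
    intro hl j
    have hpb : ∀ k : Fin m, |preact m d W x l k| ≤ (d : ℝ) * K * B ^ l :=
      ih (by omega) 
    have hPnn : (0:ℝ) ≤ (d : ℝ) * K * B ^ l := by positivity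
    calc |preact m d W x (l + 1) j|
        ≤ ∑ k : Fin m, |W (l + 1) j (colM m d k) * relu (preact m d W x l k)| :=
          Finset.abs_sum_le_sum_abs _ _
      _ ≤ ∑ _k : Fin m, K * ((d : ℝ) * K * B ^ l) := by
          refine Finset.sum_le_sum fun k _ => ?_
          rw [abs_mul]
          exact mul_le_mul (hMid (l + 1) (by omega) hl j k)
            ((abs_relu_le _).trans (hpb k)) (abs_nonneg _) hK
      _ = (m : ℝ) * K * ((d : ℝ) * K * B ^ l) := by
          simp [Finset.sum_const]; ring
      _ ≤ B * ((d : ℝ) * K * B ^ l) := mul_le_mul_of_nonneg_right hB hPnn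
      _ = (d : ℝ) * K * B ^ (l + 1) := by ring

lemma deltaAux_bound (L m d : ℕ) (hm : 1 ≤ m) (W : ℕ → Fin m → Fin (m + d) → ℝ)
    (x : Fin d → ℝ) (K B : ℝ) (hK : 0 ≤ K) (hB : (m : ℝ) * K ≤ B) (hB1 : 1 ≤ B)
    (hLast : ∀ k, |W (L - 1) ⟨0, hm⟩ (colM m d k)| ≤ K)
    (hMid : ∀ s, 1 ≤ s → s ≤ L - 2 → ∀ j k, |W s j (colM m d k)| ≤ K) :
    ∀ t, t ≤ L - 2 → ∀ k, |deltaAux L m d W x t k| ≤ Real.sqrt m * K * B ^ t := by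
  intro t
  induction t with
  | zero =>
    intro _ k
    have hsum : (∑ j : Fin m, if (j : ℕ) = 0 then W (L - 1) j (colM m d k) else 0)
        = W (L - 1) ⟨0, hm⟩ (colM m d k) := by
      rw [Finset.sum_eq_single (⟨0, hm⟩ : Fin m)]
      · simp
      · intro j _ hj
        have : (j : ℕ) ≠ 0 := fun h => hj (Fin.ext h)
        simp [this]
      · simp
    rw [pow_zero, mul_one]
    unfold deltaAux
    rw [hsum, abs_mul, abs_mul]
    calc |Real.sqrt m| * |W (L - 1) ⟨0, hm⟩ (colM m d k)| * |relu' (preact m d W x (L - 2) k)|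
        ≤ Real.sqrt m * K * 1 := by
          refine mul_le_mul (mul_le_mul ?_ (hLast k) (abs_nonneg _) (Real.sqrt_nonneg _))
            (abs_relu'_le _) (abs_nonneg _) (by positivity)
          rw [abs_of_nonneg (Real.sqrt_nonneg _)]
      _ = Real.sqrt m * K := mul_one _
  | succ t ih =>
    intro ht k
    have hs1 : 1 ≤ L - 2 - t := by omega
    have hs2 : L - 2 - t ≤ L - 2 := by omega
    have hDnn : (0:ℝ) ≤ Real.sqrt m * K * B ^ t := by positivity
    calc |deltaAux L m d W x (t + 1) k|
        = |relu' (preact m d W x (L - 2 - (t + 1)) k)| *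
            |∑ j : Fin m, W (L - 2 - t) j (colM m d k) * deltaAux L m d W x t j| := by
          show |relu' (preact m d W x (L - 2 - (t + 1)) k) *
            ∑ j : Fin m, W (L - 2 - t) j (colM m d k) * deltaAux L m d W x t j| = _
          rw [abs_mul]
      _ ≤ 1 * ∑ j : Fin m, |W (L - 2 - t) j (colM m d k) * deltaAux L m d W x t j| :=
          mul_le_mul (abs_relu'_le _) (Finset.abs_sum_le_sum_abs _ _) (abs_nonneg _)
            zero_le_one
      _ ≤ 1 * ∑ _j : Fin m, K * (Real.sqrt m * K * B ^ t) := by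
          refine mul_le_mul_of_nonneg_left (Finset.sum_le_sum fun j _ => ?_) zero_le_one
          rw [abs_mul]
          exact mul_le_mul (hMid _ hs1 hs2 j k) (ih (by omega) j) (abs_nonneg _) hK
      _ = (m : ℝ) * K * (Real.sqrt m * K * B ^ t) := by
          simp [Finset.sum_const]; ring
      _ ≤ B * (Real.sqrt m * K * B ^ t) := mul_le_mul_of_nonneg_right hB hDnn
      _ = Real.sqrt m * K * B ^ (t + 1) := by ring


lemma xent_nonneg (z : ℝ) : 0 ≤ xent z :=
  Real.log_nonneg (by have := (Real.exp_pos (-z)).le; linarith)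

lemma hasDerivAt_xent (z : ℝ) : HasDerivAt xent (xent' z) z := by
  have h1 : HasDerivAt (fun v : ℝ => 1 + Real.exp (-v)) (-Real.exp (-z)) z := by
    have := ((hasDerivAt_neg z).exp).const_add 1
    simpa using this
  have h2 := (Real.hasDerivAt_log (by positivity : (1 + Real.exp (-z)) ≠ 0)).comp z h1
  refine (h2.congr_deriv ?_ : HasDerivAt (Real.log ∘ fun v : ℝ => 1 + Real.exp (-v)) (xent' z) z)
  symm
  rw [xent']
  rw [Real.exp_neg]
  have hz := (Real.exp_pos z).ne'
  field_simp
  ring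

lemma xent'_mono : Monotone xent' := by
  intro v w h
  unfold xent'
  have h1 : (0:ℝ) < 1 + Real.exp v := one_add_exp_pos v
  have h2 : (0:ℝ) < 1 + Real.exp w := one_add_exp_pos w
  have := Real.exp_le_exp.2 h
  rw [neg_le_neg_iff]
  rw [div_le_div_iff₀ h2 h1]
  linarith

lemma xent_tangent (z u : ℝ) : xent z + xent' z * (u - z) ≤ xent u := by
  set g : ℝ → ℝ := fun v => xent v - xent' z * v with hg
  have hdg : ∀ v, HasDerivAt g (xent' v - xent' z) v := fun v =>
    by have := (hasDerivAt_xent v).sub ((hasDerivAt_id v).const_mul (xent' z)); simp at this; exact this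
  have key : g z ≤ g u := by
    rcases le_total z u with h | h
    · have := monotoneOn_of_deriv_nonneg (convex_Icc z u)
        (fun v _ => (hdg v).continuousAt.continuousWithinAt)
        (fun v _ => (hdg v).differentiableAt.differentiableWithinAt)
        (fun v hv => by
          have : z ≤ v := by
            have := interior_subset (s := Set.Icc z u) hv
            exact this.1
          rw [(hdg v).deriv]
          simpa using sub_nonneg.2 (xent'_mono this))
      exact this ⟨le_refl z, h⟩ ⟨h, le_refl u⟩ h
    · have := antitoneOn_of_deriv_nonpos (convex_Icc u z)
        (fun v _ => (hdg v).continuousAt.continuousWithinAt)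
        (fun v _ => (hdg v).differentiableAt.differentiableWithinAt)
        (fun v hv => by
          have : v ≤ z := by
            have := interior_subset (s := Set.Icc u z) hv
            exact this.2
          rw [(hdg v).deriv]
          simpa using sub_nonpos.2 (xent'_mono this))
      exact this ⟨le_refl u, h⟩ ⟨h, le_refl z⟩ h
  simp only [hg] at key
  nlinarith [key]

lemma abs_xent'_le_xent (z : ℝ) : |xent' z| ≤ xent z := by
  have h1 : (0:ℝ) < 1 + Real.exp z := one_add_exp_pos z
  have h2 : (0:ℝ) < 1 + Real.exp (-z) := one_add_exp_pos (-z)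
  have habs : |xent' z| = 1 / (1 + Real.exp z) := by
    rw [xent', abs_neg, abs_of_pos (by positivity)]
  rw [habs, xent]
  have hlog : Real.log ((1 + Real.exp (-z))⁻¹) ≤ (1 + Real.exp (-z))⁻¹ - 1 :=
    Real.log_le_sub_one_of_pos (by positivity)
  rw [Real.log_inv] at hlog
  have heq : 1 - (1 + Real.exp (-z))⁻¹ = 1 / (1 + Real.exp z) := by
    rw [Real.exp_neg]
    have hz := (Real.exp_pos z).ne'
    field_simp
    ring
  linarith [heq ▸ (by linarith : 1 - (1 + Real.exp (-z))⁻¹ ≤ Real.log (1 + Real.exp (-z)))]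

lemma gradInner_sub_comm {L m d : ℕ} (Wq A B : Wts L m d) (x : Fin d → ℝ) :
    gradInner L m d Wq x (A - B) = - gradInner L m d Wq x (B - A) := by
  simp only [gradInner, inner2, Pi.sub_apply, mul_sub, Finset.sum_sub_distrib, neg_sub]

section Bounds
variable {L m d : ℕ} {W0 W : Wts L m d} {τ : ℝ}

lemma ball_entry_abs (hW : inBall L m d W0 W τ) (l : Fin L) (j : Fin m) (c : Fin (m + d))
    (hj : (j : ℕ) < rowsOf L m (l : ℕ)) (hc : (c : ℕ) < colsOf m d (l : ℕ)) :
    |W l j c| ≤ |W0 l j c| + τ := by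
  have h := entry_close L m d W0 W τ hW l j c hj hc
  calc |W l j c| = |(W l j c - W0 l j c) + W0 l j c| := by ring_nf
    _ ≤ |W l j c - W0 l j c| + |W0 l j c| := abs_add_le _ _
    _ ≤ |W0 l j c| + τ := by linarith

lemma ball_first_entry (hL : 2 ≤ L) (hW : inBall L m d W0 W τ) (K0 : ℝ)
    (hK0 : ∀ (l : Fin L) (j : Fin m) (c : Fin (m + d)), |W0 l j c| ≤ K0)
    (j : Fin m) (k : Fin d) : |extW L m d W 0 j (colD m d k)| ≤ K0 + τ := by
  have h0L : 0 < L := by omega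
  rw [extW, dif_pos h0L]
  have := ball_entry_abs hW ⟨0, h0L⟩ j (colD m d k)
    (by rw [rowsOf, if_neg (by simp only [Fin.val_mk]; omega)]; exact j.isLt)
    (by rw [colsOf, if_pos rfl]; exact k.isLt)
  exact this.trans (by linarith [hK0 ⟨0, h0L⟩ j (colD m d k)])

lemma ball_mid_entry (hL : 2 ≤ L) (hW : inBall L m d W0 W τ) (K0 : ℝ)
    (hK0 : ∀ (l : Fin L) (j : Fin m) (c : Fin (m + d)), |W0 l j c| ≤ K0)
    (s : ℕ) (hs1 : 1 ≤ s) (hs2 : s ≤ L - 2) (j : Fin m) (k : Fin m) :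
    |extW L m d W s j (colM m d k)| ≤ K0 + τ := by
  have hsL : s < L := by omega
  rw [extW, dif_pos hsL]
  have := ball_entry_abs hW ⟨s, hsL⟩ j (colM m d k)
    (by rw [rowsOf, if_neg (by simp; omega)]; exact j.isLt)
    (by rw [colsOf, if_neg (by simp; omega)]; exact k.isLt)
  exact this.trans (by linarith [hK0 ⟨s, hsL⟩ j (colM m d k)])

lemma ball_last_entry (hL : 2 ≤ L) (hm : 1 ≤ m) (hW : inBall L m d W0 W τ) (K0 : ℝ)
    (hK0 : ∀ (l : Fin L) (j : Fin m) (c : Fin (m + d)), |W0 l j c| ≤ K0)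
    (j : Fin m) (hj : (j : ℕ) = 0) (k : Fin m) :
    |extW L m d W (L - 1) j (colM m d k)| ≤ K0 + τ := by
  have hsL : L - 1 < L := by omega
  rw [extW, dif_pos hsL]
  have := ball_entry_abs hW ⟨L - 1, hsL⟩ j (colM m d k)
    (by rw [rowsOf, if_pos rfl]; omega)
    (by rw [colsOf, if_neg (by simp; omega)]; exact k.isLt)
  exact this.trans (by linarith [hK0 ⟨L - 1, hsL⟩ j (colM m d k)])

end Bounds


section Bounds2
variable {L m d : ℕ} {W0 W : Wts L m d} {τ K0 : ℝ} {x : Fin d → ℝ}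

lemma ball_preact (hL : 2 ≤ L) (hτ : 0 ≤ τ) (hW : inBall L m d W0 W τ)
    (hK0nn : 0 ≤ K0)
    (hK0 : ∀ (l : Fin L) (j : Fin m) (c : Fin (m + d)), |W0 l j c| ≤ K0)
    (hx : ∀ k, |x k| ≤ 1) :
    ∀ l, l ≤ L - 2 → ∀ j, |preact m d (extW L m d W) x l j| ≤
      (d : ℝ) * (K0 + τ) * ((m : ℝ) * (K0 + τ) + 1) ^ l := by
  have hK : (0:ℝ) ≤ K0 + τ := by linarith
  have hmK : (0:ℝ) ≤ (m : ℝ) * (K0 + τ) := by positivity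
  exact preact_bound m d _ x (K0 + τ) _ hK (by linarith) (by linarith) hx (L - 2)
    (fun j k => ball_first_entry hL hW K0 hK0 j k)
    (fun s h1 h2 j k => ball_mid_entry hL hW K0 hK0 s h1 h2 j k)

lemma ball_delta (hL : 2 ≤ L) (hm : 1 ≤ m) (hτ : 0 ≤ τ) (hW : inBall L m d W0 W τ)
    (hK0nn : 0 ≤ K0)
    (hK0 : ∀ (l : Fin L) (j : Fin m) (c : Fin (m + d)), |W0 l j c| ≤ K0) :
    ∀ l, ∀ k, |delta L m d (extW L m d W) x l k| ≤
      Real.sqrt m * (K0 + τ) * ((m : ℝ) * (K0 + τ) + 1) ^ L := by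
  intro l k
  have hK : (0:ℝ) ≤ K0 + τ := by linarith
  have hmK : (0:ℝ) ≤ (m : ℝ) * (K0 + τ) := by positivity
  have hB1 : (1:ℝ) ≤ (m : ℝ) * (K0 + τ) + 1 := by linarith
  have h := deltaAux_bound L m d hm (extW L m d W) x (K0 + τ) _ hK (by linarith) hB1
    (fun k => ball_last_entry hL hm hW K0 hK0 ⟨0, hm⟩ rfl k)
    (fun s h1 h2 j k => ball_mid_entry hL hW K0 hK0 s h1 h2 j k)
    (L - 2 - l) (by omega) k
  refine h.trans ?_
  have : ((m : ℝ) * (K0 + τ) + 1) ^ (L - 2 - l) ≤ ((m : ℝ) * (K0 + τ) + 1) ^ L :=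
    pow_le_pow_right₀ hB1 (by omega)
  have hs : (0:ℝ) ≤ Real.sqrt m * (K0 + τ) := by positivity
  calc Real.sqrt m * (K0 + τ) * ((m : ℝ) * (K0 + τ) + 1) ^ (L - 2 - l)
      ≤ Real.sqrt m * (K0 + τ) * ((m : ℝ) * (K0 + τ) + 1) ^ L :=
        mul_le_mul_of_nonneg_left this hs

lemma gradLayer_zero (hL : 2 ≤ L) (W : Wts L m d) (x : Fin d → ℝ) (l : ℕ) (hlL : l < L)
    (j : Fin m) (c : Fin (m + d))
    (h : ¬((j : ℕ) < rowsOf L m l ∧ (c : ℕ) < colsOf m d l)) :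
    gradLayer L m d W x l j c = 0 := by
  rw [gradLayer]
  by_cases hl1 : l = L - 1
  · rw [if_pos hl1]
    rw [dif_neg]
    intro ⟨hj, hc⟩
    exact h (by rw [rowsOf, if_pos hl1, colsOf, if_neg (by omega)]; exact ⟨by omega, hc⟩)
  · rw [if_neg hl1]
    rw [rowsOf, if_neg hl1] at h
    by_cases hl0 : l = 0
    · rw [if_pos hl0]
      rw [hl0, colsOf, if_pos rfl] at h
      rw [dif_neg (by push_neg at h; exact Nat.not_lt.2 (by omega) )]
      · ring
    · rw [if_neg hl0]
      rw [colsOf, if_neg hl0] at h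
      rw [dif_neg (by push_neg at h; exact Nat.not_lt.2 (by omega))]
      · ring

lemma gradLayer_bound (hL : 2 ≤ L) (hm : 1 ≤ m) (hτ : 0 ≤ τ) (hW : inBall L m d W0 W τ)
    (hK0nn : 0 ≤ K0)
    (hK0 : ∀ (l : Fin L) (j : Fin m) (c : Fin (m + d)), |W0 l j c| ≤ K0)
    (hx : ∀ k, |x k| ≤ 1) (l : ℕ) (hlL : l < L) (j : Fin m) (c : Fin (m + d)) :
    |gradLayer L m d W x l j c| ≤
      (Real.sqrt m * (K0 + τ + 1) * ((m : ℝ) * (K0 + τ) + 1) ^ L) *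
        ((d : ℝ) * (K0 + τ) * ((m : ℝ) * (K0 + τ) + 1) ^ L + 1) := by
  set K := K0 + τ with hKdef
  set B := (m : ℝ) * K + 1 with hBdef
  have hK : (0:ℝ) ≤ K := by simp [hKdef]; linarith
  have hB1 : (1:ℝ) ≤ B := by simp [hBdef]; positivity
  have hBL : (1:ℝ) ≤ B ^ L := one_le_pow₀ hB1
  have hsm : (0:ℝ) ≤ Real.sqrt m := Real.sqrt_nonneg _
  have hD1 : Real.sqrt m ≤ Real.sqrt m * (K + 1) * B ^ L := by
    have h : 1 ≤ (K + 1) * B ^ L := by nlinarith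
    calc Real.sqrt m = Real.sqrt m * 1 := (mul_one _).symm
      _ ≤ Real.sqrt m * ((K + 1) * B ^ L) := mul_le_mul_of_nonneg_left h hsm
      _ = Real.sqrt m * (K + 1) * B ^ L := by ring
  set P := (d : ℝ) * K * B ^ L with hPdef
  set D := Real.sqrt m * (K + 1) * B ^ L with hDdef
  have hPnn : (0:ℝ) ≤ P := by
    rw [hPdef]; positivity
  have hDnn : (0:ℝ) ≤ D := hsm.trans hD1
  have hpre : ∀ l', l' ≤ L - 2 → ∀ jj, |preact m d (extW L m d W) x l' jj| ≤ P := by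
    intro l' hl' jj
    refine (ball_preact hL hτ hW hK0nn hK0 hx l' hl' jj).trans ?_
    have hpow : B ^ l' ≤ B ^ L := pow_le_pow_right₀ hB1 (by omega)
    have h0 : (0:ℝ) ≤ (d : ℝ) * K := mul_nonneg (Nat.cast_nonneg d) hK
    calc (d : ℝ) * (K0 + τ) * ((m : ℝ) * (K0 + τ) + 1) ^ l' = (d : ℝ) * K * B ^ l' := by
          rw [hKdef, hBdef]
      _ ≤ (d : ℝ) * K * B ^ L := mul_le_mul_of_nonneg_left hpow h0
      _ = P := hPdef.symm
  have hdel : ∀ l' k, |delta L m d (extW L m d W) x l' k| ≤ D := by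
    intro l' k
    refine (ball_delta hL hm hτ hW hK0nn hK0 l' k).trans ?_
    calc Real.sqrt m * (K0 + τ) * ((m : ℝ) * (K0 + τ) + 1) ^ L
        = Real.sqrt m * K * B ^ L := by rw [hKdef, hBdef]
      _ ≤ Real.sqrt m * (K + 1) * B ^ L :=
          mul_le_mul_of_nonneg_right
            (mul_le_mul_of_nonneg_left (by linarith) hsm) (by linarith)
      _ = D := hDdef.symm
  rw [gradLayer]
  by_cases hl1 : l = L - 1
  · rw [if_pos hl1]
    by_cases hc : (j : ℕ) = 0 ∧ (c : ℕ) < m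
    · rw [dif_pos hc, abs_mul, abs_of_nonneg hsm]
      have h2 : |relu (preact m d (extW L m d W) x (L - 2) ⟨(c : ℕ), hc.2⟩)| ≤ P + 1 :=
        ((abs_relu_le _).trans (hpre (L - 2) (le_refl _) _)).trans (by linarith)
      exact mul_le_mul hD1 h2 (abs_nonneg _) hDnn
    · rw [dif_neg hc, abs_zero]
      exact mul_nonneg hDnn (by linarith)
  · rw [if_neg hl1]
    by_cases hl0 : l = 0
    · rw [if_pos hl0, abs_mul]
      have h1 := hdel 0 j
      have h2 : |(if h : (c : ℕ) < d then x ⟨(c : ℕ), h⟩ else 0)| ≤ 1 := by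
        split
        · exact hx _
        · simp
      exact mul_le_mul h1 (h2.trans (by linarith)) (abs_nonneg _) hDnn
    · rw [if_neg hl0, abs_mul]
      have h1 := hdel l j
      have h2 : |(if h : (c : ℕ) < m then
          relu (preact m d (extW L m d W) x (l - 1) ⟨(c : ℕ), h⟩) else 0)| ≤ P := by
        split
        · exact (abs_relu_le _).trans (hpre (l - 1) (by omega) _)
        · simpa using hPnn
      exact mul_le_mul h1 (h2.trans (by linarith)) (abs_nonneg _) hDnn

end Bounds2


section Bounds3
variable {L m d : ℕ} {W0 W W' : Wts L m d} {τ K0 : ℝ} {x : Fin d → ℝ}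

lemma ball_netOut (hL : 2 ≤ L) (hm : 1 ≤ m) (hτ : 0 ≤ τ) (hW : inBall L m d W0 W τ)
    (hK0nn : 0 ≤ K0)
    (hK0 : ∀ (l : Fin L) (j : Fin m) (c : Fin (m + d)), |W0 l j c| ≤ K0)
    (hx : ∀ k, |x k| ≤ 1) :
    |netOut L m d W x| ≤ Real.sqrt m * ((m : ℝ) * ((m : ℝ) * ((K0 + τ) *
      ((d : ℝ) * (K0 + τ) * ((m : ℝ) * (K0 + τ) + 1) ^ L)))) := by
  set K := K0 + τ with hKdef
  set B := (m : ℝ) * K + 1 with hBdef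
  set P := (d : ℝ) * K * B ^ L with hPdef
  have hK : (0:ℝ) ≤ K := by rw [hKdef]; linarith
  have hB1 : (1:ℝ) ≤ B := by
    rw [hBdef]; nlinarith [mul_nonneg (Nat.cast_nonneg (α := ℝ) m) hK]
  have hsm : (0:ℝ) ≤ Real.sqrt m := Real.sqrt_nonneg _
  have hPnn : (0:ℝ) ≤ P := by
    rw [hPdef]
    exact mul_nonneg (mul_nonneg (Nat.cast_nonneg d) hK) (by positivity)
  have hpre : ∀ l', l' ≤ L - 2 → ∀ jj, |preact m d (extW L m d W) x l' jj| ≤ P := by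
    intro l' hl' jj
    refine (ball_preact hL hτ hW hK0nn hK0 hx l' hl' jj).trans ?_
    have hpow : B ^ l' ≤ B ^ L := pow_le_pow_right₀ hB1 (by omega)
    have h0 : (0:ℝ) ≤ (d : ℝ) * K := mul_nonneg (Nat.cast_nonneg d) hK
    calc (d : ℝ) * (K0 + τ) * ((m : ℝ) * (K0 + τ) + 1) ^ l' = (d : ℝ) * K * B ^ l' := by
          rw [hKdef, hBdef]
      _ ≤ (d : ℝ) * K * B ^ L := mul_le_mul_of_nonneg_left hpow h0
      _ = P := hPdef.symm
  have hterm : ∀ (j k : Fin m),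
      |(if (j : ℕ) = 0 then
          extW L m d W (L - 1) j (colM m d k) *
            relu (preact m d (extW L m d W) x (L - 2) k)
        else 0)| ≤ K * P := by
    intro j k
    split
    · rename_i hj
      rw [abs_mul]
      exact mul_le_mul (ball_last_entry hL hm hW K0 hK0 j hj k)
        ((abs_relu_le _).trans (hpre (L - 2) (le_refl _) k)) (abs_nonneg _) hK
    · rw [abs_zero]; exact mul_nonneg hK hPnn
  rw [netOut, abs_mul, abs_of_nonneg hsm]
  refine mul_le_mul_of_nonneg_left ?_ hsm
  calc |∑ j : Fin m, ∑ k : Fin m, (if (j : ℕ) = 0 then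
          extW L m d W (L - 1) j (colM m d k) *
            relu (preact m d (extW L m d W) x (L - 2) k) else 0)|
      ≤ ∑ j : Fin m, |∑ k : Fin m, (if (j : ℕ) = 0 then
          extW L m d W (L - 1) j (colM m d k) *
            relu (preact m d (extW L m d W) x (L - 2) k) else 0)| :=
        Finset.abs_sum_le_sum_abs _ _
    _ ≤ ∑ _j : Fin m, ∑ _k : Fin m, K * P := by
        refine Finset.sum_le_sum fun j _ => ?_
        exact (Finset.abs_sum_le_sum_abs _ _).trans
          (Finset.sum_le_sum fun k _ => hterm j k)
    _ = (m : ℝ) * ((m : ℝ) * (K * P)) := by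
        simp [Finset.sum_const, Finset.card_univ, mul_assoc]
    _ = (m : ℝ) * ((m : ℝ) * (K * ((d : ℝ) * K * B ^ L))) := by rw [hPdef]

lemma ball_gradInner (hL : 2 ≤ L) (hm : 1 ≤ m) (hτ : 0 ≤ τ)
    (hW : inBall L m d W0 W τ) (hW' : inBall L m d W0 W' τ)
    (hK0nn : 0 ≤ K0)
    (hK0 : ∀ (l : Fin L) (j : Fin m) (c : Fin (m + d)), |W0 l j c| ≤ K0)
    (hx : ∀ k, |x k| ≤ 1) :
    |gradInner L m d W x (W' - W)| ≤ (L : ℝ) * ((m : ℝ) * (((m : ℝ) + (d : ℝ)) *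
      (((Real.sqrt m * (K0 + τ + 1) * ((m : ℝ) * (K0 + τ) + 1) ^ L) *
        ((d : ℝ) * (K0 + τ) * ((m : ℝ) * (K0 + τ) + 1) ^ L + 1)) * (2 * τ)))) := by
  set G := (Real.sqrt m * (K0 + τ + 1) * ((m : ℝ) * (K0 + τ) + 1) ^ L) *
        ((d : ℝ) * (K0 + τ) * ((m : ℝ) * (K0 + τ) + 1) ^ L + 1) with hGdef
  have hGnn : (0:ℝ) ≤ G :=
    (abs_nonneg _).trans
      (gradLayer_bound hL hm hτ hW hK0nn hK0 hx 0 (by omega) ⟨0, hm⟩ ⟨0, by omega⟩)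
  have hterm : ∀ (l : Fin L) (j : Fin m) (c : Fin (m + d)),
      |gradLayer L m d W x (l : ℕ) j c * (W' - W) l j c| ≤ G * (2 * τ) := by
    intro l j c
    by_cases hb : (j : ℕ) < rowsOf L m (l : ℕ) ∧ (c : ℕ) < colsOf m d (l : ℕ)
    · rw [abs_mul]
      have hv : |(W' - W) l j c| ≤ 2 * τ := by
        have e1 := entry_close L m d W0 W' τ hW' l j c hb.1 hb.2
        have e2 := entry_close L m d W0 W τ hW l j c hb.1 hb.2
        have : (W' - W) l j c = (W' l j c - W0 l j c) - (W l j c - W0 l j c) := by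
          simp [Pi.sub_apply]
        rw [this]
        calc |(W' l j c - W0 l j c) - (W l j c - W0 l j c)|
            ≤ |W' l j c - W0 l j c| + |W l j c - W0 l j c| := abs_sub _ _
          _ ≤ 2 * τ := by linarith
      exact mul_le_mul (gradLayer_bound hL hm hτ hW hK0nn hK0 hx (l : ℕ) l.isLt j c)
        hv (abs_nonneg _) hGnn
    · rw [gradLayer_zero hL W x (l : ℕ) l.isLt j c hb, zero_mul, abs_zero]
      exact mul_nonneg hGnn (by linarith)
  calc |gradInner L m d W x (W' - W)|
      ≤ ∑ l : Fin L, |inner2 m d (gradLayer L m d W x (l : ℕ)) ((W' - W) l)| :=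
        Finset.abs_sum_le_sum_abs _ _
    _ ≤ ∑ _l : Fin L, ((m : ℝ) * (((m : ℝ) + (d : ℝ)) * (G * (2 * τ)))) := by
        refine Finset.sum_le_sum fun l _ => ?_
        calc |inner2 m d (gradLayer L m d W x (l : ℕ)) ((W' - W) l)|
            ≤ ∑ j : Fin m, |∑ c : Fin (m + d),
                gradLayer L m d W x (l : ℕ) j c * (W' - W) l j c| :=
              Finset.abs_sum_le_sum_abs _ _
          _ ≤ ∑ _j : Fin m, ∑ _c : Fin (m + d), G * (2 * τ) := by
              refine Finset.sum_le_sum fun j _ => ?_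
              exact (Finset.abs_sum_le_sum_abs _ _).trans
                (Finset.sum_le_sum fun c _ => hterm l j c)
          _ = (m : ℝ) * (((m : ℝ) + (d : ℝ)) * (G * (2 * τ))) := by
              simp [Finset.sum_const, Finset.card_univ, mul_assoc]
    _ = (L : ℝ) * ((m : ℝ) * (((m : ℝ) + (d : ℝ)) * (G * (2 * τ)))) := by
        simp [Finset.sum_const, Finset.card_univ]

end Bounds3

end Paper

open Paper

/-- inequality (A.6) in the proof of Lemma 5.1.
If `W, W* ∈ B(W0, τ)`, then for every training index `i`:
`⟨W − W*, ∇_W L_i(W)⟩ ≥ (1 − 2ε_app(τ)) ℓ(y_i f_W(x_i)) − ℓ(y_i F_{W0,W*}(x_i))`. -/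
theorem loss_gradient_inner_bound
    (L m d n : ℕ) (hL : 2 ≤ L) (hm : 1 ≤ m) (hd : 1 ≤ d) (hn : 1 ≤ n)
    (X : Fin n → Fin d → ℝ) (Y : Fin n → ℝ)
    (hX : ∀ i, ∑ k, (X i k) ^ 2 = 1)
    (hY : ∀ i, Y i = 1 ∨ Y i = -1)
    (W0 W Wstar : Wts L m d) (τ : ℝ) (hτ : 0 < τ)
    (hW : inBall L m d W0 W τ) (hWstar : inBall L m d W0 Wstar τ) :
    ∀ i : Fin n,
      (∑ l : Fin L,
          inner2 m d (fun j c => W l j c - Wstar l j c)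
            (sampleLossGrad L m d (X i) (Y i) W (l : ℕ))) ≥
        (1 - 2 * epsApp L m d n X W0 τ) * xent (Y i * netOut L m d W (X i)) -
          xent (Y i * ntrf L m d W0 Wstar (X i)) := by
  intro i
  -- inputs are bounded by 1
  have hxall : ∀ (i' : Fin n) (k : Fin d), |X i' k| ≤ 1 := by
    intro i' k
    have h1 : (X i' k) ^ 2 ≤ 1 := by
      rw [← hX i']
      exact Finset.single_le_sum (f := fun k => (X i' k) ^ 2)
        (fun _ _ => sq_nonneg _) (Finset.mem_univ k)
    rw [pow_two] at h1
    exact abs_le_one_iff_mul_self_le_one.2 h1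
  -- a uniform bound on the entries of W0
  obtain ⟨K0, hK0'⟩ := Finite.exists_le
    (fun p : Fin L × Fin m × Fin (m + d) => |W0 p.1 p.2.1 p.2.2|)
  have hK0 : ∀ (l : Fin L) (j : Fin m) (c : Fin (m + d)), |W0 l j c| ≤ K0 :=
    fun l j c => hK0' (l, j, c)
  have hK0nn : 0 ≤ K0 :=
    (abs_nonneg _).trans (hK0 ⟨0, by omega⟩ ⟨0, hm⟩ ⟨0, by omega⟩)
  set NB := Real.sqrt m * ((m : ℝ) * ((m : ℝ) * ((K0 + τ) *
      ((d : ℝ) * (K0 + τ) * ((m : ℝ) * (K0 + τ) + 1) ^ L)))) with hNBdef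
  set GIB := (L : ℝ) * ((m : ℝ) * (((m : ℝ) + (d : ℝ)) *
      (((Real.sqrt m * (K0 + τ + 1) * ((m : ℝ) * (K0 + τ) + 1) ^ L) *
        ((d : ℝ) * (K0 + τ) * ((m : ℝ) * (K0 + τ) + 1) ^ L + 1)) * (2 * τ)))) with hGIBdef
  -- the approximation-error set is bounded above
  have hBdd : BddAbove { e : ℝ | ∃ (i : Fin n) (Wa Wb : Wts L m d),
      inBall L m d W0 Wa τ ∧ inBall L m d W0 Wb τ ∧
      e = |netOut L m d Wb (X i) - netOut L m d Wa (X i) -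
            gradInner L m d Wa (X i) (Wb - Wa)| } := by
    refine ⟨NB + NB + GIB, ?_⟩
    rintro e ⟨i', Wa, Wb, hWa, hWb, rfl⟩
    have h1 := ball_netOut hL hm hτ.le hWb hK0nn hK0 (hxall i')
    have h2 := ball_netOut hL hm hτ.le hWa hK0nn hK0 (hxall i')
    have h3 := ball_gradInner hL hm hτ.le hWa hWb hK0nn hK0 (hxall i')
    calc |netOut L m d Wb (X i') - netOut L m d Wa (X i') -
            gradInner L m d Wa (X i') (Wb - Wa)|
        ≤ |netOut L m d Wb (X i') - netOut L m d Wa (X i')| +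
            |gradInner L m d Wa (X i') (Wb - Wa)| := abs_sub _ _
      _ ≤ (|netOut L m d Wb (X i')| + |netOut L m d Wa (X i')|) +
            |gradInner L m d Wa (X i') (Wb - Wa)| := by
          have := abs_sub (netOut L m d Wb (X i')) (netOut L m d Wa (X i'))
          linarith
      _ ≤ NB + NB + GIB := by rw [hNBdef, hGIBdef]; linarith
  set ε := epsApp L m d n X W0 τ with hεdef
  set A := netOut L m d Wstar (X i) - netOut L m d W (X i) -
      gradInner L m d W (X i) (Wstar - W) with hAdef
  set Bq := netOut L m d Wstar (X i) - netOut L m d W0 (X i) -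
      gradInner L m d W0 (X i) (Wstar - W0) with hBqdef
  have ha : |A| ≤ ε := le_csSup hBdd ⟨i, W, Wstar, hW, hWstar, rfl⟩
  have hb : |Bq| ≤ ε :=
    le_csSup hBdd ⟨i, W0, Wstar, inBall_self L m d W0 τ hτ.le, hWstar, rfl⟩
  have hεnn : 0 ≤ ε := (abs_nonneg A).trans ha
  set z := Y i * netOut L m d W (X i) with hzdef
  set u := Y i * ntrf L m d W0 Wstar (X i) with hudef
  -- rewrite the left-hand side
  have hLHS : (∑ l : Fin L,
      inner2 m d (fun j c => W l j c - Wstar l j c)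
        (sampleLossGrad L m d (X i) (Y i) W (l : ℕ))) =
      xent' z * (Y i * gradInner L m d W (X i) (W - Wstar)) := by
    rw [hzdef]
    simp only [inner2, sampleLossGrad, gradInner, Finset.mul_sum]
    refine Finset.sum_congr rfl fun l _ => Finset.sum_congr rfl fun j _ =>
      Finset.sum_congr rfl fun c _ => ?_
    simp only [Pi.sub_apply]
    ring
  have hGI : gradInner L m d W (X i) (W - Wstar) =
      netOut L m d W (X i) - netOut L m d Wstar (X i) + A := by
    rw [gradInner_sub_comm W W Wstar (X i), hAdef]; ring
  have hNS : netOut L m d Wstar (X i) = ntrf L m d W0 Wstar (X i) + Bq := by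
    rw [ntrf, hBqdef]; ring
  have hmain : (∑ l : Fin L,
      inner2 m d (fun j c => W l j c - Wstar l j c)
        (sampleLossGrad L m d (X i) (Y i) W (l : ℕ))) =
      xent' z * (z - u) + xent' z * (Y i * (A - Bq)) := by
    rw [hLHS, hGI, hNS, hzdef, hudef]; ring
  have hy1 : |Y i| = 1 := by rcases hY i with h | h <;> rw [h] <;> norm_num
  have h1 : xent' z * (z - u) ≥ xent z - xent u := by
    have ht := xent_tangent z u
    have e : xent' z * (z - u) = -(xent' z * (u - z)) := by ring
    rw [e]; linarith
  have h2 : xent' z * (Y i * (A - Bq)) ≥ -(2 * ε * xent z) := by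
    have habs : |xent' z * (Y i * (A - Bq))| ≤ xent z * (2 * ε) := by
      rw [abs_mul, abs_mul, hy1, one_mul]
      have hab : |A - Bq| ≤ 2 * ε := by
        have := abs_sub A Bq
        linarith
      exact mul_le_mul (abs_xent'_le_xent z) hab (abs_nonneg _) (xent_nonneg z)
    have := neg_abs_le (xent' z * (Y i * (A - Bq)))
    nlinarith
  have hgoal : (1 - 2 * ε) * xent z - xent u =
      (xent z - xent u) - 2 * ε * xent z := by ring
  rw [hmain, hgoal]
  linarith
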